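/- For each c ∈ (-1/3, 0), there exists A > 0 such that for all a ≥ A, Γ(a+1, a+1+c)/Γ(a+1) > Γ(a, a+c)/Γ(a). That is, P(X_{a+1} - (a+1) > c) > P(X_a - a > c) for all sufficiently large a. -/

import Mathlib

open Real MeasureTheory Set Filter Topology

noncomputable def uIG (a x : ℝ) : ℝ := ∫ t in Set.Ioi x, t ^ (a - 1) * Real.exp (-t)

lemma integrableOn_rpow_exp {s x : ℝ} (hs : 0 < s) (hx : 0 < x) :
    IntegrableOn (fun t : ℝ => t ^ (s - 1) * Real.exp (-t)) (Ioi x) := by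
  have h2 := (Real.GammaIntegral_convergent hs).mono_set (Ioi_subset_Ioi hx.le)
  exact h2.congr_fun (fun t ht => mul_comm _ _) measurableSet_Ioi

lemma uIG_succ {a x : ℝ} (ha : 0 < a) (hx : 0 < x) :
    uIG (a + 1) x = a * uIG a x + x ^ a * Real.exp (-x) := by
  have hint1 : IntegrableOn (fun t : ℝ => t ^ a * Real.exp (-t)) (Ioi x) := by
    have := integrableOn_rpow_exp (show (0:ℝ) < a + 1 by linarith) hx
    simpa using this
  have hint2 : IntegrableOn (fun t : ℝ => t ^ (a-1) * Real.exp (-t)) (Ioi x) :=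
    integrableOn_rpow_exp ha hx
  have hint2' : IntegrableOn (fun t : ℝ => a * (t ^ (a-1) * Real.exp (-t))) (Ioi x) :=
    hint2.const_mul a
  have hderiv : ∀ t ∈ Ioi x, HasDerivAt (fun t : ℝ => -(t ^ a * Real.exp (-t)))
      (t ^ a * Real.exp (-t) - a * (t ^ (a-1) * Real.exp (-t))) t := by
    intro t ht
    have ht0 : t ≠ 0 := by have := hx.trans ht; positivity
    have h1 : HasDerivAt (fun t : ℝ => t ^ a) (a * t ^ (a-1)) t :=
      Real.hasDerivAt_rpow_const (Or.inl ht0)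
    have h2 : HasDerivAt (fun t : ℝ => Real.exp (-t)) (-Real.exp (-t)) t := by
      simpa using ((hasDerivAt_id t).neg.exp)
    have := (h1.mul h2).neg
    exact this.congr_deriv (by ring)
  have htend : Tendsto (fun t : ℝ => -(t ^ a * Real.exp (-t))) atTop (𝓝 0) := by
    have := (tendsto_rpow_mul_exp_neg_mul_atTop_nhds_zero a 1 one_pos).neg
    simp only [neg_zero] at this
    refine this.congr (fun t => by rw [neg_one_mul])
  have hcont : ContinuousWithinAt (fun t : ℝ => -(t ^ a * Real.exp (-t))) (Ici x) x := by
    apply ContinuousAt.continuousWithinAt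
    have h1 : ContinuousAt (fun t : ℝ => t ^ a) x :=
      Real.continuousAt_rpow_const x a (Or.inl hx.ne')
    exact ((h1.mul ((Real.continuous_exp.comp continuous_neg).continuousAt))).neg
  have key := integral_Ioi_of_hasDerivAt_of_tendsto hcont hderiv (hint1.sub hint2') htend
  rw [integral_sub hint1 hint2', integral_const_mul] at key
  have e1 : uIG (a+1) x = ∫ t in Ioi x, t ^ a * Real.exp (-t) := by
    simp [uIG]
  have e2 : uIG a x = ∫ t in Ioi x, t ^ (a-1) * Real.exp (-t) := rfl
  rw [e1, e2]
  linarith [key]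

lemma uIG_split {a x y : ℝ} (ha : 0 < a) (hx : 0 < x) (hxy : x ≤ y) :
    uIG a x = (∫ t in Ioc x y, t ^ (a-1) * Real.exp (-t)) + uIG a y := by
  have h1 := integrableOn_rpow_exp ha hx
  have hy : 0 < y := lt_of_lt_of_le hx hxy
  rw [uIG, uIG, ← Ioc_union_Ioi_eq_Ioi hxy,
    setIntegral_union Ioc_disjoint_Ioi_same measurableSet_Ioi
      (h1.mono_set Ioc_subset_Ioi_self) (integrableOn_rpow_exp ha hy)]

lemma log_quad {β v : ℝ} (hb1 : 1/4 ≤ β) (hb2 : β ≤ 1/2) (hv0 : 0 ≤ v) (hv1 : v ≤ 1/2 - β) :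
    Real.log (1 + v) ≤ v - β * v^2 := by
  have h0 : (0:ℝ) < 1 + v := by linarith
  have hy : 0 ≤ v - β * v^2 := by nlinarith
  rw [Real.log_le_iff_le_exp h0]
  have h3 := Real.sum_le_exp_of_nonneg hy 3
  simp [Finset.sum_range_succ] at h3
  nlinarith [sq_nonneg v, sq_nonneg (v - β*v^2), sq_nonneg (1 - β*v), sq_nonneg (v*(1-2*β))]

lemma log_quad_lower {v : ℝ} (hv0 : 0 ≤ v) : v - v^2 ≤ Real.log (1 + v) := by
  have h0 : (0:ℝ) < 1 + v := by linarith
  have h := Real.log_le_sub_one_of_pos (show (0:ℝ) < (1+v)⁻¹ by positivity)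
  rw [Real.log_inv] at h
  have h2 : (1+v)⁻¹ ≤ 1 - v + v^2 := by
    rw [inv_le_iff_one_le_mul₀ h0]
    nlinarith
  linarith

lemma exp_quad {z : ℝ} (hz : z ≤ 1/2) : Real.exp z ≤ 1 + z + 2*z^2 := by
  have h := Real.add_one_le_exp (-z)
  have h1 : Real.exp z * (1 - z) ≤ 1 := by
    have := mul_le_mul_of_nonneg_left h (Real.exp_pos z).le
    rw [← Real.exp_add, add_neg_cancel, Real.exp_zero] at this
    linarith [this]
  nlinarith [h1, sq_nonneg z, mul_nonneg (sq_nonneg z) (by linarith : (0:ℝ) ≤ 1 - 2*z)]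

set_option maxHeartbeats 1000000 in
lemma core {c a : ℝ} (hc1 : -1/3 < c) (hc2 : c < 0) (hA : 220/(1+3*c) ≤ a) :
    (∫ t in Ioc (a+c) (a+c+1), t ^ a * Real.exp (-t)) < (a+c) ^ a * Real.exp (-(a+c)) := by
  have hc3 : (0:ℝ) < 1 + 3*c := by linarith
  have h220 : (220:ℝ) ≤ a := le_trans (by rw [le_div_iff₀ hc3]; nlinarith) hA
  set x := a + c with hxdef
  have hxc : (217:ℝ) ≤ x * (1+3*c) := by
    have h3 : (1:ℝ)/3 ≤ 3/(1+3*c) := by rw [div_le_div_iff₀ (by norm_num) hc3]; nlinarith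
    have h4 : 217/(1+3*c) ≤ x := by
      have h5 : (217:ℝ)/(1+3*c) = 220/(1+3*c) - 3/(1+3*c) := by rw [div_sub_div_same]; norm_num
      rw [h5, hxdef]; linarith
    calc (217:ℝ) = 217/(1+3*c) * (1+3*c) := by field_simp
    _ ≤ x * (1+3*c) := by gcongr
  have hx217 : (217:ℝ) ≤ x := by nlinarith
  have hx0 : (0:ℝ) < x := by linarith
  have hax : x ≤ a := by rw [hxdef]; linarith
  have hax2 : a ≤ x + 1/3 := by rw [hxdef]; linarith
  have ha0 : (0:ℝ) < a := by linarith
  have hxe : a = x - c := by rw [hxdef]; ring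
  clear_value x
  set β := (1 - 3*c)/4 with hβ
  have hb1 : 1/4 ≤ β := by rw [hβ]; linarith
  have hb2 : β ≤ 1/2 := by rw [hβ]; linarith
  have hb0 : (0:ℝ) ≤ β := by linarith
  clear_value β
  set C := x ^ a * Real.exp (-x) with hCdef
  have hC : 0 < C := by rw [hCdef]; positivity
  clear_value C
  set P : ℝ → ℝ := fun t => C * (1 + 18/x^2 + (-c*(t-x) - β*(t-x)^2)/x) with hPdef
  have key : ∀ t ∈ Icc x (x+1), t ^ a * Real.exp (-t) ≤ P t := by
    intro t ht
    obtain ⟨ht1, ht2⟩ := ht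
    set u := t - x with hu
    clear_value u
    have hu0 : 0 ≤ u := by rw [hu]; linarith
    have hu1 : u ≤ 1 := by rw [hu]; linarith
    have hv0 : 0 ≤ u/x := div_nonneg hu0 hx0.le
    have hvx : u/x * x = u := div_mul_cancel₀ u hx0.ne'
    have hv1 : u/x ≤ 1/2 - β := by
      have h5 : u/x ≤ 1/x := by gcongr
      have h6 : 1/x ≤ (1+3*c)/4 := by
        rw [div_le_div_iff₀ hx0 (by norm_num : (0:ℝ) < 4)]; nlinarith
      have h7 : (1:ℝ)/2 - β = (1+3*c)/4 := by rw [hβ]; ring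
      linarith
    have hlog1 := log_quad hb1 hb2 hv0 hv1
    have hlog2 := log_quad_lower hv0
    have h1v : (0:ℝ) < 1 + u/x := by positivity
    set z := a * Real.log (1+u/x) - u with hz
    clear_value z
    have heq : t ^ a * Real.exp (-t) = C * Real.exp z := by
      have ht' : t = x * (1+u/x) := by field_simp; rw [hu]; ring
      rw [hCdef, hz]
      rw [show a * Real.log (1+u/x) - u = a * Real.log (1+u/x) + -u by ring, Real.exp_add]
      have e1 : t ^ a = x ^ a * Real.exp (a * Real.log (1+u/x)) := by
        rw [ht', Real.mul_rpow hx0.le h1v.le, Real.rpow_def_of_pos h1v,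
          mul_comm (Real.log (1+u/x)) a]
      have e2 : Real.exp (-t) = Real.exp (-x) * Real.exp (-u) := by
        rw [← Real.exp_add]; congr 1; rw [hu]; ring
      rw [e1, e2]; ring
    have hz_up : z ≤ (-c*u - β*u^2)/x := by
      have s1 : z ≤ a * (u/x - β*(u/x)^2) - u := by
        have := mul_le_mul_of_nonneg_left hlog1 ha0.le
        rw [hz]; linarith
      have s2 : a * (u/x - β*(u/x)^2) - u ≤ (-c*u - β*u^2)/x := by
        rw [hxe, le_div_iff₀ hx0, ← mul_le_mul_iff_of_pos_right hx0]
        have expand : ((x-c)*(u/x - β*(u/x)^2) - u) * x * x = -β*u^2*x - c*u*x + β*c*u^2 := by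
          field_simp; ring
        rw [expand]
        nlinarith [mul_nonneg (mul_nonneg hb0 (sq_nonneg u)) (by linarith : (0:ℝ) ≤ -c)]
      linarith
    have hz_lo : -(2:ℝ)/x ≤ z := by
      have s1 : a * (u/x - (u/x)^2) - u ≤ z := by
        have := mul_le_mul_of_nonneg_left hlog2 ha0.le
        rw [hz]; linarith
      have s2 : -(2:ℝ)/x ≤ a * (u/x - (u/x)^2) - u := by
        rw [hxe, div_le_iff₀ hx0, ← mul_le_mul_iff_of_pos_right hx0]
        have expand : ((x - c) * (u/x - (u/x)^2) - u) * x * x = -u^2*x - c*u*x + c*u^2 := by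
          field_simp; ring
        rw [expand]
        nlinarith [mul_nonneg (mul_nonneg (by linarith : (0:ℝ) ≤ -c) hu0) hx0.le,
          mul_nonneg (by nlinarith : (0:ℝ) ≤ 1 - u^2) hx0.le,
          mul_nonneg (by linarith : (0:ℝ) ≤ -c) (by nlinarith : (0:ℝ) ≤ 1 - u^2)]
      linarith
    have hz_half : z ≤ 1/2 := by
      have : (-c*u - β*u^2)/x ≤ 1/2 := by
        rw [div_le_iff₀ hx0]; nlinarith [mul_nonneg hb0 (sq_nonneg u)]
      linarith
    have hz_up2 : z ≤ 2/x := by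
      have : (-c*u - β*u^2)/x ≤ 2/x := by
        gcongr
        nlinarith [mul_nonneg hb0 (sq_nonneg u)]
      linarith
    have hzsq : z^2 ≤ 4/x^2 := by
      have h8 : z^2 ≤ (2/x)^2 := sq_le_sq' (by rw [neg_div] at hz_lo; linarith) hz_up2
      calc z^2 ≤ (2/x)^2 := h8
      _ = 4/x^2 := by rw [div_pow]; norm_num
    have hexp : Real.exp z ≤ 1 + (-c*u - β*u^2)/x + 8/x^2 := by
      have := exp_quad hz_half
      have h10 : (8:ℝ)/x^2 = 2*(4/x^2) := by ring
      linarith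
    calc t ^ a * Real.exp (-t) = C * Real.exp z := heq
    _ ≤ C * (1 + (-c*u - β*u^2)/x + 8/x^2) := by
        apply mul_le_mul_of_nonneg_left hexp hC.le
    _ ≤ P t := by
        rw [hPdef]
        simp only
        rw [← hu]
        apply mul_le_mul_of_nonneg_left ?_ hC.le
        have h9 : (8:ℝ)/x^2 ≤ 18/x^2 := by gcongr <;> norm_num
        linarith
  have hxle : x ≤ x + 1 := by linarith
  have hcont_f : ContinuousOn (fun t : ℝ => t ^ a * Real.exp (-t)) (Icc x (x+1)) := by
    apply ContinuousOn.mul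
    · apply ContinuousOn.rpow_const continuousOn_id
      intro t ht
      exact Or.inl (ne_of_gt (lt_of_lt_of_le hx0 ht.1))
    · exact (Real.continuous_exp.comp continuous_neg).continuousOn
  have hIf : IntervalIntegrable (fun t : ℝ => t ^ a * Real.exp (-t)) volume x (x+1) := by
    apply ContinuousOn.intervalIntegrable
    rwa [uIcc_of_le hxle]
  have hPc : Continuous P := by rw [hPdef]; fun_prop
  have hIP : IntervalIntegrable P volume x (x+1) := hPc.intervalIntegrable x (x+1)
  have hmono := intervalIntegral.integral_mono_on hxle hIf hIP key
  have hH : ∀ t : ℝ, HasDerivAt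
      (fun t => C*((1 + 18/x^2)*t + (-c*(t-x)^2/2 - β*(t-x)^3/3)/x)) (P t) t := by
    intro t
    have h1 : HasDerivAt (fun t : ℝ => (t - x)^2) (2*(t-x)) t := by
      simpa using ((hasDerivAt_id t).sub_const x).fun_pow 2
    have h2 : HasDerivAt (fun t : ℝ => (t - x)^3) (3*(t-x)^2) t := by
      simpa using ((hasDerivAt_id t).sub_const x).fun_pow 3
    have h3 := (((h1.const_mul (-c)).div_const 2).sub ((h2.const_mul β).div_const 3)).div_const x
    have h4 := (((hasDerivAt_id t).const_mul (1 + 18/x^2)).add h3).const_mul C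
    refine h4.congr_deriv ?_
    rw [hPdef]
    simp only
    field_simp
  have hcalc : ∫ t in x..(x+1), P t = C*(1 + 18/x^2 + (-c/2 - β/3)/x) := by
    rw [intervalIntegral.integral_eq_sub_of_hasDerivAt (fun t _ => hH t) hIP]
    field_simp
    ring
  have hnum : 18 - (1+3*c)*x/12 < 0 := by nlinarith
  have hlt1 : 1 + 18/x^2 + (-c/2 - β/3)/x < 1 := by
    have h1 := div_neg_of_neg_of_pos hnum (show (0:ℝ) < x^2 by positivity)
    have h2 : 18/x^2 + (-c/2 - β/3)/x = (18 - (1+3*c)*x/12)/x^2 := by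
      rw [hβ]; field_simp; ring
    linarith [h1, h2.le, h2.ge]
  have hfin : C*(1 + 18/x^2 + (-c/2 - β/3)/x) < C := by
    have := mul_lt_mul_of_pos_left hlt1 hC
    simpa using this
  calc (∫ t in Ioc x (x+1), t ^ a * Real.exp (-t))
      = ∫ t in x..(x+1), t ^ a * Real.exp (-t) := (intervalIntegral.integral_of_le hxle).symm
  _ ≤ ∫ t in x..(x+1), P t := hmono
  _ = C*(1 + 18/x^2 + (-c/2 - β/3)/x) := hcalc
  _ < C := hfin


theorem stmt18 (c : ℝ) (hc1 : -1/3 < c) (hc2 : c < 0) :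
    ∃ A : ℝ, 0 < A ∧ ∀ a : ℝ, A ≤ a →
      uIG a (a + c) / Real.Gamma a <
        uIG (a + 1) (a + 1 + c) / Real.Gamma (a + 1) := by
  have hc3 : (0:ℝ) < 1 + 3*c := by linarith
  refine ⟨220/(1+3*c), by positivity, ?_⟩
  intro a ha
  have h220 : (220:ℝ) ≤ a := le_trans (by rw [le_div_iff₀ hc3]; nlinarith) ha
  have ha0 : (0:ℝ) < a := by linarith
  have hx0 : (0:ℝ) < a + c := by linarith
  have hG : 0 < Real.Gamma a := Real.Gamma_pos_of_pos ha0
  have hG1 : 0 < Real.Gamma (a+1) := Real.Gamma_pos_of_pos (by linarith)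
  rw [div_lt_div_iff₀ hG hG1, Real.Gamma_add_one ha0.ne']
  have hsucc := uIG_succ ha0 hx0
  have hsplit := uIG_split (show (0:ℝ) < a+1 by linarith) hx0 (show a+c ≤ a+c+1 by linarith)
  simp only [add_sub_cancel_right] at hsplit
  have hcore := core hc1 hc2 ha
  have hmain : a * uIG a (a+c) < uIG (a+1) (a+1+c) := by
    have he : a+1+c = a+c+1 := by ring
    rw [he]
    linarith [hsucc, hsplit, hcore]
  calc uIG a (a+c) * (a * Real.Gamma a) = (a * uIG a (a+c)) * Real.Gamma a := by ring
  _ < uIG (a+1) (a+1+c) * Real.Gamma a := mul_lt_mul_of_pos_right hmain hG
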